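/- arXiv:math/0407394 — 2 statements merged into one kernel-verified Lean document; each statement's English description precedes it below -/
import Mathlib

section
/- Let m ≥ 2 and let L be a thick generalized m-gon. Suppose A and A' are distinct apartments of L whose intersection A ∩ A' is a path with l edges, where 1 ≤ l < m. Then there exists an apartment A'' of L containing the path A ∩ A' such that both intersections A ∩ A'' and A' ∩ A'' are paths with strictly more than l edges. -/
open SimpleGraph

variable {V : Type*}

/-- A generalized `m`-gon: a connected bipartite simple graph of diameter `m`
and girth `2 * m`. -/
def IsGenPolygon (G : SimpleGraph V) (m : ℕ) : Prop :=
  G.Connected ∧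
    (∃ c : V → Bool, ∀ ⦃v w : V⦄, G.Adj v w → c v ≠ c w) ∧
    (∀ u v : V, G.dist u v ≤ m) ∧ (∃ u v : V, G.dist u v = m) ∧
    G.egirth = (2 * m : ℕ∞)

/-- A graph is thick if every vertex has at least three neighbours. -/
def Thick (G : SimpleGraph V) : Prop :=
  ∀ v : V, ∃ a b c : V, G.Adj v a ∧ G.Adj v b ∧ G.Adj v c ∧ a ≠ b ∧ a ≠ c ∧ b ≠ c

/-- An apartment of a generalized `m`-gon: a subgraph which is a cycle of
length `2 * m`. -/
def IsApartment (G : SimpleGraph V) (m : ℕ) (A : G.Subgraph) : Prop :=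
  ∃ (v : V) (w : G.Walk v v), w.IsCycle ∧ w.length = 2 * m ∧ w.toSubgraph = A

/-- A subgraph which is a path with exactly `k` edges. -/
def IsPathSubgraph (G : SimpleGraph V) (k : ℕ) (P : G.Subgraph) : Prop :=
  ∃ (u v : V) (p : G.Walk u v), p.IsPath ∧ p.length = k ∧ p.toSubgraph = P

namespace GP

variable {G : SimpleGraph V}

lemma walk_parity (c : V → Bool) (hc : ∀ ⦃v w : V⦄, G.Adj v w → c v ≠ c w)
    {u v : V} (w : G.Walk u v) : (c u = c v) ↔ Even w.length := by
  induction w with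
  | nil => simp
  | @cons a b d h p ih =>
    have hab := hc h
    simp only [Walk.length_cons, Nat.even_add_one, ← ih]
    cases hca : c a <;> cases hcb : c b <;> cases hcd : c d <;> simp_all

lemma exists_split_at {u v : V} (p : G.Walk u v) (n : ℕ) (hn : n ≤ p.length) :
    ∃ (x : V) (p1 : G.Walk u x) (p2 : G.Walk x v), p = p1.append p2 ∧ p1.length = n := by
  induction p generalizing n with
  | nil => exact ⟨_, .nil, .nil, rfl, by simp at hn ⊢; omega⟩
  | @cons a b d h p ih =>
    cases n with
    | zero => exact ⟨a, .nil, .cons h p, rfl, rfl⟩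
    | succ n =>
      obtain ⟨x, p1, p2, rfl, hl⟩ := ih n (by simpa using hn)
      exact ⟨x, .cons h p1, p2, rfl, by simp [hl]⟩

lemma exists_first_hit (S : Set V) {u v : V} (p : G.Walk u v) (hv : v ∈ S) :
    ∃ (z : V) (p1 : G.Walk u z) (p2 : G.Walk z v), p = p1.append p2 ∧ z ∈ S ∧
      ∀ t ∈ p1.support, t ≠ z → t ∉ S := by
  classical
  induction p with
  | nil => exact ⟨_, .nil, .nil, rfl, hv, by simp⟩
  | @cons a b d h p ih =>
    by_cases ha : a ∈ S
    · exact ⟨a, .nil, .cons h p, rfl, ha, by simp⟩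
    · obtain ⟨z, p1, p2, rfl, hz, hmin⟩ := ih hv
      refine ⟨z, .cons h p1, p2, rfl, hz, ?_⟩
      intro t ht htz
      rcases (by simpa using ht : t = a ∨ t ∈ p1.support) with rfl | ht'
      · exact ha
      · exact hmin t ht' htz

lemma append_isPath {a b d : V} {p : G.Walk a b} {q : G.Walk b d}
    (hp : p.IsPath) (hq : q.IsPath)
    (h : ∀ t, t ∈ p.support → t ∈ q.support → t = b) : (p.append q).IsPath := by
  rw [Walk.isPath_def, Walk.support_append]
  have hqn := hq.support_nodup
  rw [q.support_eq_cons, List.nodup_cons] at hqn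
  refine List.Nodup.append hp.support_nodup hqn.2 ?_
  intro t ht1 ht2
  have : t ∈ q.support := by rw [q.support_eq_cons]; exact List.mem_cons_of_mem _ ht2
  have := h t ht1 this
  subst this
  exact hqn.1 ht2

lemma no_common_edge {a b a' b' z : V} {p : G.Walk a b} {q : G.Walk a' b'}
    (h : ∀ t, t ∈ p.support → t ∈ q.support → t = z) : ∀ e ∈ p.edges, e ∉ q.edges := by
  intro e
  induction e using Sym2.ind with
  | _ s t =>
    intro hep heq
    have hst : s ≠ t := (p.adj_of_mem_edges hep).ne
    have h1 := h s (p.fst_mem_support_of_mem_edges hep) (q.fst_mem_support_of_mem_edges heq)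
    have h2 := h t (p.snd_mem_support_of_mem_edges hep) (q.snd_mem_support_of_mem_edges heq)
    exact hst (h1.trans h2.symm)

lemma mem_tail_of_path {a b : V} {p : G.Walk a b} (hp : p.IsPath) {t : V}
    (ht : t ∈ p.support.tail) : t ∈ p.support ∧ t ≠ a := by
  have hn := hp.support_nodup
  rw [p.support_eq_cons, List.nodup_cons] at hn
  constructor
  · rw [p.support_eq_cons]; exact List.mem_cons_of_mem _ ht
  · rintro rfl; exact hn.1 ht

lemma tail_nodup_of_path {a b : V} {p : G.Walk a b} (hp : p.IsPath) :
    p.support.tail.Nodup := by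
  have hn := hp.support_nodup
  rw [p.support_eq_cons, List.nodup_cons] at hn
  exact hn.2

lemma adj_of_length_one {a b : V} (p : G.Walk a b) (h : p.length = 1) : G.Adj a b := by
  cases p with
  | nil => simp at h
  | cons had q =>
    cases q with
    | nil => exact had
    | cons h' q' => simp [Walk.length_cons] at h

lemma inf_toSubgraph_eq_singleton {H : G.Subgraph} {a b z : V} {p : G.Walk a b}
    (hz : z ∈ H.verts) (hzp : z ∈ p.support)
    (h : ∀ t ∈ p.support, t ∈ H.verts → t = z) :
    H ⊓ p.toSubgraph = G.singletonSubgraph z := by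
  apply le_antisymm
  · constructor
    · intro t ht
      rw [Subgraph.verts_inf] at ht
      have htp : t ∈ p.support := p.mem_verts_toSubgraph.mp ht.2
      have := h t htp ht.1
      simp [singletonSubgraph_verts, this]
    · intro s t hst
      exfalso
      rw [Subgraph.inf_adj] at hst
      have hs : s ∈ p.support := p.mem_verts_toSubgraph.mp hst.2.fst_mem
      have ht : t ∈ p.support := p.mem_verts_toSubgraph.mp hst.2.snd_mem
      have hs' := h s hs hst.1.fst_mem
      have ht' := h t ht hst.1.snd_mem
      subst hs'; subst ht'
      exact G.loopless.irrefl _ (hst.1.adj_sub)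
  · rw [SimpleGraph.singletonSubgraph_le_iff, Subgraph.verts_inf]
    exact ⟨hz, p.mem_verts_toSubgraph.mpr hzp⟩

lemma exists_cycle_of_two_paths : ∀ (n : ℕ) {u v : V} (p q : G.Walk u v),
    p.IsPath → q.IsPath → p ≠ q → p.length + q.length ≤ n →
    ∃ (x : V) (c : G.Walk x x), c.IsCycle ∧ c.length ≤ p.length + q.length := by
  classical
  intro n
  induction n with
  | zero =>
    intro u v p q hp hq hne hlen
    have hp0 : p.length = 0 := by omega
    have hq0 : q.length = 0 := by omega
    obtain rfl : u = v := Walk.eq_of_length_eq_zero hp0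
    rw [Walk.length_eq_zero_iff] at hp0 hq0
    exact absurd ((Walk.nil_iff_eq_nil.mp hp0).trans (Walk.nil_iff_eq_nil.mp hq0).symm) hne
  | succ n ih =>
    intro u v p q hp hq hne hlen
    cases p with
    | nil =>
      rw [Walk.isPath_iff_eq_nil] at hq
      exact absurd hq.symm hne
    | @cons _ a _ hua p' =>
      cases q with
      | nil =>
        exact absurd (Walk.isPath_iff_eq_nil.mp hp).symm (Ne.symm hne)
      | @cons _ b _ hub q' =>
        by_cases hab : a = b
        · subst hab
          have hne' : p' ≠ q' := fun h => hne (by cases h; rfl)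
          obtain ⟨x, c, hc, hcl⟩ := ih p' q' (hp.of_cons) (hq.of_cons) hne'
            (by simp at hlen ⊢; omega)
          exact ⟨x, c, hc, by simp at hcl ⊢; omega⟩
        · -- first vertex of p' lying on q's support
          have hu' : u ∉ p'.support := by
            have := (Walk.cons_isPath_iff hua p').mp hp
            exact this.2
          obtain ⟨z, p1, p2, hsplit, hz, hmin⟩ :=
            exists_first_hit {t | t ∈ (Walk.cons hub q').support} p' (by simp)
          have hp1 : p1.IsPath := by
            have : (p1.append p2).IsPath := hsplit ▸ hp.of_cons
            exact this.of_append_left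
          have hzu : z ≠ u := by
            rintro rfl
            exact hu' (hsplit ▸ (by simp [Walk.mem_support_append_iff]))
          set q₀ : G.Walk u v := Walk.cons hub q' with hq₀
          have hzq : z ∈ q₀.support := hz
          set q1 : G.Walk u z := q₀.takeUntil z hzq with hq1def
          have hq1 : q1.IsPath := hq.takeUntil hzq
          -- membership facts
          have hq1rev_nodup : q1.reverse.support.Nodup := (Walk.isPath_def _).mp hq1.reverse
          obtain ⟨T, hT⟩ : ∃ T, q1.reverse.support = z :: T := ⟨_, q1.reverse.support_eq_cons⟩
          have hzT : z ∉ T := by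
            rw [hT] at hq1rev_nodup; exact (List.nodup_cons.mp hq1rev_nodup).1
          have hTmem : ∀ t ∈ T, t ∈ q₀.support ∧ t ≠ z := by
            intro t ht
            constructor
            · apply Walk.support_takeUntil_subset q₀ hzq
              have : t ∈ q1.reverse.support := by rw [hT]; exact List.mem_cons_of_mem _ ht
              rwa [Walk.support_reverse, List.mem_reverse] at this
            · rintro rfl; exact hzT ht
          -- the cycle
          have hPpath : (p1.append q1.reverse).IsPath := by
            rw [Walk.isPath_def, Walk.support_append, hT]
            refine List.Nodup.append ((Walk.isPath_def _).mp hp1) ?_ ?_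
            · rw [hT] at hq1rev_nodup; exact (List.nodup_cons.mp hq1rev_nodup).2
            · intro t htp htq
              obtain ⟨htq₀, htz⟩ := hTmem t htq
              exact hmin t htp htz htq₀
          have hedge : s(u, a) ∉ (p1.append q1.reverse).edges := by
            rw [Walk.edges_append]
            intro hmem
            rcases List.mem_append.mp hmem with hmem | hmem
            · refine hu' ?_
              rw [hsplit, Walk.mem_support_append_iff]
              exact Or.inl (p1.fst_mem_support_of_mem_edges hmem)
            · rw [Walk.edges_reverse, List.mem_reverse] at hmem
              have : s(u, a) ∈ q₀.edges := Walk.edges_takeUntil_subset q₀ hzq hmem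
              rw [hq₀] at this
              simp only [Walk.edges_cons, List.mem_cons] at this
              rcases this with heq | hmem'
              · rcases Sym2.eq_iff.mp heq with ⟨-, hab'⟩ | ⟨hub', hau⟩
                · exact hab hab'
                · exact G.loopless.irrefl u (hau ▸ hua)
              · have hmemsup : u ∈ q'.support := Walk.fst_mem_support_of_mem_edges q' hmem'
                exact ((Walk.cons_isPath_iff hub q').mp hq).2 hmemsup
          refine ⟨u, Walk.cons hua (p1.append q1.reverse), ?_, ?_⟩
          · exact (Walk.cons_isCycle_iff _ hua).mpr ⟨hPpath, hedge⟩
          · have h1 : p1.length ≤ p'.length := by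
              have := congrArg Walk.length hsplit
              rw [Walk.length_append] at this; omega
            have h2 : q1.length ≤ q₀.length := Walk.length_takeUntil_le q₀ hzq
            simp only [Walk.length_cons, Walk.length_append, Walk.length_reverse]
            omega
lemma egirth_le_of_isCycle {x : V} {c : G.Walk x x} (hc : c.IsCycle) :
    G.egirth ≤ c.length := by
  rw [egirth]
  exact iInf_le_of_le x (iInf_le_of_le c (iInf_le _ hc))

lemma two_paths_length {m : ℕ} (hg : G.egirth = (2 * m : ℕ∞)) {u v : V}
    (p q : G.Walk u v) (hp : p.IsPath) (hq : q.IsPath) (hne : p ≠ q) :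
    2 * m ≤ p.length + q.length := by
  obtain ⟨x, c, hc, hcl⟩ := exists_cycle_of_two_paths (p.length + q.length) p q hp hq hne le_rfl
  have h1 : G.egirth ≤ c.length := egirth_le_of_isCycle hc
  rw [hg] at h1
  have : (2 * m : ℕ) ≤ c.length := by exact_mod_cast h1
  omega

/-- A path of length at most `m` realizes the distance. -/
lemma dist_eq_of_short_path {m : ℕ} (hg : G.egirth = (2 * m : ℕ∞)) {u v : V}
    (p : G.Walk u v) (hp : p.IsPath) (hpm : p.length ≤ m) : G.dist u v = p.length := by
  classical
  have hd : G.dist u v ≤ p.length := SimpleGraph.dist_le p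
  rcases eq_or_lt_of_le hd with h | h
  · omega
  · exfalso
    obtain ⟨w, hw⟩ := (p.reachable).exists_walk_length_eq_dist
    have hbp : w.bypass.IsPath := Walk.bypass_isPath w
    have hbl : w.bypass.length ≤ w.length := Walk.length_bypass_le w
    have hbd : G.dist u v ≤ w.bypass.length := SimpleGraph.dist_le _
    have hbl' : w.bypass.length = G.dist u v := by omega
    have hne : w.bypass ≠ p := by
      intro he
      rw [he] at hbl'
      omega
    have := two_paths_length hg w.bypass p hbp hp hne
    omega

/-- Splitting a cycle at a vertex gives two internally disjoint paths. -/
lemma cycle_split [DecidableEq V] {r : V} (w : G.Walk r r) (hw : w.IsCycle) {v : V}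
    (hv : v ∈ w.support) (hvr : v ≠ r) :
    ∃ (p1 : G.Walk r v) (p2 : G.Walk v r),
      w = p1.append p2 ∧ p1.IsPath ∧ p2.IsPath ∧
      (∀ x, x ∈ p1.support → x ∈ p2.support → x = r ∨ x = v) ∧
      (∀ e, e ∈ p1.edges → e ∉ p2.edges) := by
  have hspec := w.take_spec hv
  set p1 := w.takeUntil v hv with hp1def
  set p2 := w.dropUntil v hv with hp2def
  have hsup : w.support = p1.support ++ p2.support.tail := by
    rw [← hspec, Walk.support_append]
  have hT : w.support.tail = p1.support.tail ++ p2.support.tail := by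
    rw [hsup]
    conv_lhs => rw [p1.support_eq_cons]
    rfl
  have hnodup := hw.support_nodup
  rw [hT, List.nodup_append] at hnodup
  obtain ⟨h1n, h2n, hdisj⟩ := hnodup
  have hrp2 : r ∈ p2.support.tail := by
    have hmem : r ∈ p2.support := p2.end_mem_support
    rw [p2.support_eq_cons, List.mem_cons] at hmem
    rcases hmem with hmem | hmem
    · exact absurd hmem.symm hvr
    · exact hmem
  have hvp1 : v ∈ p1.support.tail := by
    have hmem : v ∈ p1.support := p1.end_mem_support
    rw [p1.support_eq_cons, List.mem_cons] at hmem
    rcases hmem with hmem | hmem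
    · exact absurd hmem hvr
    · exact hmem
  have hrp1 : r ∉ p1.support.tail := fun h => hdisj _ h _ hrp2 rfl
  have hvp2 : v ∉ p2.support.tail := fun h => hdisj _ hvp1 _ h rfl
  have hp1 : p1.IsPath := by
    rw [Walk.isPath_def, p1.support_eq_cons, List.nodup_cons]
    exact ⟨hrp1, h1n⟩
  have hp2 : p2.IsPath := by
    rw [Walk.isPath_def, p2.support_eq_cons, List.nodup_cons]
    exact ⟨hvp2, h2n⟩
  refine ⟨p1, p2, hspec.symm, hp1, hp2, ?_, ?_⟩
  · intro x hx1 hx2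
    rw [p1.support_eq_cons, List.mem_cons] at hx1
    rw [p2.support_eq_cons, List.mem_cons] at hx2
    rcases hx1 with rfl | hx1
    · exact Or.inl rfl
    · rcases hx2 with rfl | hx2
      · exact Or.inr rfl
      · exact absurd hx2 (fun h => hdisj _ hx1 _ h rfl)
  · have hedges : w.edges = p1.edges ++ p2.edges := by
      rw [← hspec, Walk.edges_append]
    have hen := hw.isCircuit.isTrail.edges_nodup
    rw [hedges, List.nodup_append] at hen
    exact fun e he1 he2 => hen.2.2 _ he1 _ he2 rfl

lemma apartment_decomp {m l : ℕ} (hg : G.egirth = (2 * m : ℕ∞)) {A : G.Subgraph}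
    {r : V} (w : G.Walk r r) (hw : w.IsCycle) (hwl : w.length = 2 * m)
    (hwsub : w.toSubgraph = A) {u v : V} (γ : G.Walk u v) (hγ : γ.IsPath)
    (hγl : γ.length = l) (hl : l < m) (hl1 : 1 ≤ l)
    (huA : u ∈ A.verts) (hvA : v ∈ A.verts) :
    ∃ α : G.Walk u v, α.IsPath ∧ α.length = 2 * m - l ∧
      γ.toSubgraph ⊔ α.toSubgraph = A ∧
      (∀ x, x ∈ γ.support → x ∈ α.support → x = u ∨ x = v) ∧
      (∀ e, e ∈ γ.edges → e ∉ α.edges) := by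
  classical
  have huv : u ≠ v := by
    rintro rfl
    rw [Walk.isPath_iff_eq_nil] at hγ
    subst hγ; simp at hγl; omega
  have hu : u ∈ w.support := by
    rw [← Walk.mem_verts_toSubgraph, hwsub]; exact huA
  set w' : G.Walk u u := w.rotate u hu with hw'def
  have hw' : w'.IsCycle := hw.rotate hu
  have hw'sub : w'.toSubgraph = A := by rw [hw'def, Walk.toSubgraph_rotate, hwsub]
  have hw'l : w'.length = 2 * m := by
    have h1 := congrArg Walk.length (w.take_spec hu)
    rw [Walk.length_append] at h1
    have h2 : w'.length = (w.dropUntil u hu).length + (w.takeUntil u hu).length := by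
      rw [hw'def]; simp only [Walk.rotate, Walk.length_append]
    omega
  have hv : v ∈ w'.support := by
    rw [← Walk.mem_verts_toSubgraph, hw'sub]; exact hvA
  obtain ⟨p1, p2, hsplit, hp1, hp2, hinter, hedis⟩ := cycle_split w' hw' hv huv.symm
  have hlensum : p1.length + p2.length = 2 * m := by
    have := congrArg Walk.length hsplit
    rw [Walk.length_append] at this; omega
  have hAsup : p1.toSubgraph ⊔ p2.toSubgraph = A := by
    rw [← Walk.toSubgraph_append, ← hsplit, hw'sub]
  have hcases : γ = p1 ∨ γ = p2.reverse := by
    by_contra hcon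
    push_neg at hcon
    have h1 := two_paths_length hg γ p1 hγ hp1 hcon.1
    have h2 := two_paths_length hg γ p2.reverse hγ hp2.reverse hcon.2
    rw [Walk.length_reverse] at h2
    omega
  rcases hcases with rfl | hγp2
  · refine ⟨p2.reverse, hp2.reverse, ?_, ?_, ?_, ?_⟩
    · rw [Walk.length_reverse]; omega
    · rw [Walk.toSubgraph_reverse]; exact hAsup
    · intro x hx1 hx2
      rw [Walk.support_reverse, List.mem_reverse] at hx2
      exact hinter x hx1 hx2
    · intro e he1 he2
      rw [Walk.edges_reverse, List.mem_reverse] at he2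
      exact hedis e he1 he2
  · subst hγp2
    refine ⟨p1, hp1, ?_, ?_, ?_, ?_⟩
    · rw [Walk.length_reverse] at hγl; omega
    · rw [Walk.toSubgraph_reverse, sup_comm]; exact hAsup
    · intro x hx1 hx2
      rw [Walk.support_reverse, List.mem_reverse] at hx1
      rcases hinter x hx2 hx1 with h | h
      · exact Or.inl h
      · exact Or.inr h
    · intro e he1 he2
      rw [Walk.edges_reverse, List.mem_reverse] at he1
      exact hedis e he2 he1
end GP

set_option maxHeartbeats 1000000 in
/-- If two distinct apartments of a thick generalized `m`-gon intersect in a path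
with `l` edges, `1 ≤ l < m`, then there is an apartment containing this path whose
intersections with both given apartments are paths with strictly more than `l`
edges. -/
theorem exists_apartment_with_larger_intersections
    (G : SimpleGraph V) (m : ℕ) (hm : 2 ≤ m)
    (hG : IsGenPolygon G m) (hthick : Thick G)
    (A A' : G.Subgraph) (hA : IsApartment G m A) (hA' : IsApartment G m A')
    (hne : A ≠ A') (l : ℕ) (hl1 : 1 ≤ l) (hlm : l < m)
    (hint : IsPathSubgraph G l (A ⊓ A')) :
    ∃ A'' : G.Subgraph, IsApartment G m A'' ∧ A ⊓ A' ≤ A'' ∧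
      (∃ l₁ : ℕ, l < l₁ ∧ IsPathSubgraph G l₁ (A ⊓ A'')) ∧
      (∃ l₂ : ℕ, l < l₂ ∧ IsPathSubgraph G l₂ (A' ⊓ A'')) := by
  classical
  obtain ⟨hconn, ⟨c, hc⟩, hdiam, -, hgirth⟩ := hG
  obtain ⟨u, v, γ, hγp, hγl, hγsub⟩ := hint
  have huv : u ≠ v := by
    rintro rfl
    rw [Walk.isPath_iff_eq_nil] at hγp
    rw [hγp] at hγl; simp at hγl; omega
  have huAA' : u ∈ (A ⊓ A').verts := by rw [← hγsub]; exact γ.start_mem_verts_toSubgraph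
  have hvAA' : v ∈ (A ⊓ A').verts := by rw [← hγsub]; exact γ.end_mem_verts_toSubgraph
  rw [Subgraph.verts_inf] at huAA' hvAA'
  obtain ⟨huA, huA'⟩ := huAA'
  obtain ⟨hvA, hvA'⟩ := hvAA'
  obtain ⟨rA, wA, hwA, hwAl, hwAsub⟩ := hA
  obtain ⟨rB, wB, hwB, hwBl, hwBsub⟩ := hA'
  obtain ⟨α, hαp, hαl, hαsub, hαint, hαed⟩ :=
    GP.apartment_decomp hgirth wA hwA hwAl hwAsub γ hγp hγl hlm hl1 huA hvA
  obtain ⟨β, hβp, hβl, hβsub, hβint, hβed⟩ :=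
    GP.apartment_decomp hgirth wB hwB hwBl hwBsub γ hγp hγl hlm hl1 huA' hvA'
  -- membership helpers
  have hγA : ∀ t ∈ γ.support, t ∈ A.verts := by
    intro t ht; rw [← hαsub, Subgraph.verts_sup]; exact Or.inl (γ.mem_verts_toSubgraph.mpr ht)
  have hγA' : ∀ t ∈ γ.support, t ∈ A'.verts := by
    intro t ht; rw [← hβsub, Subgraph.verts_sup]; exact Or.inl (γ.mem_verts_toSubgraph.mpr ht)
  have hαA : ∀ t ∈ α.support, t ∈ A.verts := by
    intro t ht; rw [← hαsub, Subgraph.verts_sup]; exact Or.inr (α.mem_verts_toSubgraph.mpr ht)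
  have hβA' : ∀ t ∈ β.support, t ∈ A'.verts := by
    intro t ht; rw [← hβsub, Subgraph.verts_sup]; exact Or.inr (β.mem_verts_toSubgraph.mpr ht)
  have hmemγ : ∀ t, t ∈ A.verts → t ∈ A'.verts → t ∈ γ.support := by
    intro t h1 h2
    have ht : t ∈ (A ⊓ A').verts := by rw [Subgraph.verts_inf]; exact ⟨h1, h2⟩
    rw [← hγsub] at ht; exact γ.mem_verts_toSubgraph.mp ht
  have hIA : ∀ t ∈ α.support, t ≠ u → t ≠ v → t ∉ A'.verts := by
    intro t ht h1 h2 hmem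
    rcases hαint t (hmemγ t (hαA t ht) hmem) ht with rfl | rfl
    exacts [h1 rfl, h2 rfl]
  have hIB : ∀ t ∈ β.support, t ≠ u → t ≠ v → t ∉ A.verts := by
    intro t ht h1 h2 hmem
    rcases hβint t (hmemγ t hmem (hβA' t ht)) ht with rfl | rfl
    exacts [h1 rfl, h2 rfl]
  -- the vertex x on α at distance m - l from u
  obtain ⟨x, α1, α2, hαsplit, hα1l⟩ := GP.exists_split_at α (m - l) (by omega)
  have hαp' : (α1.append α2).IsPath := hαsplit ▸ hαp
  have hα1p : α1.IsPath := hαp'.of_append_left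
  have hα2p : α2.IsPath := hαp'.of_append_right
  have hα2l : α2.length = m := by
    have h := congrArg Walk.length hαsplit; rw [Walk.length_append] at h; omega
  have hxu : x ≠ u := by
    rintro rfl
    rw [Walk.isPath_iff_eq_nil] at hα1p; rw [hα1p] at hα1l; simp at hα1l; omega
  have hxv : x ≠ v := by
    rintro rfl
    rw [Walk.isPath_iff_eq_nil] at hα2p; rw [hα2p] at hα2l; simp at hα2l; omega
  have hα1sub : ∀ t ∈ α1.support, t ∈ α.support := by
    intro t ht; rw [hαsplit, Walk.mem_support_append_iff]; exact Or.inl ht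
  have hxα : x ∈ α.support := hα1sub x α1.end_mem_support
  have hxA : x ∈ A.verts := hαA x hxα
  have hxA' : x ∉ A'.verts := hIA x hxα hxu hxv
  have hvα1 : v ∉ α1.support := by
    intro hmem
    have hns := hαp'.support_nodup
    rw [Walk.support_append, List.nodup_append] at hns
    refine hns.2.2 _ hmem _ ?_ rfl
    have h2 : v ∈ α2.support := α2.end_mem_support
    rw [α2.support_eq_cons] at h2
    rcases List.mem_cons.mp h2 with h | h
    · exact absurd h.symm hxv
    · exact h
  -- the path P from v to x of length m
  set P : G.Walk v x := γ.reverse.append α1 with hPdef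
  have hPp : P.IsPath := by
    apply GP.append_isPath hγp.reverse hα1p
    intro t ht1 ht2
    rw [Walk.support_reverse, List.mem_reverse] at ht1
    rcases hαint t ht1 (hα1sub t ht2) with rfl | rfl
    · rfl
    · exact absurd ht2 hvα1
  have hPl : P.length = m := by
    rw [hPdef, Walk.length_append, Walk.length_reverse]; omega
  have hdvx : G.dist v x = m := by
    have := GP.dist_eq_of_short_path hgirth P hPp (le_of_eq hPl); omega
  -- the vertex y on β adjacent to v
  obtain ⟨y, δ1, δ2, hβsplit, hδ1l⟩ := GP.exists_split_at β (2 * m - l - 1) (by omega)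
  have hβp' : (δ1.append δ2).IsPath := hβsplit ▸ hβp
  have hδ1p : δ1.IsPath := hβp'.of_append_left
  have hδ2p : δ2.IsPath := hβp'.of_append_right
  have hδ2l : δ2.length = 1 := by
    have h := congrArg Walk.length hβsplit; rw [Walk.length_append] at h; omega
  have hyv : G.Adj y v := GP.adj_of_length_one δ2 hδ2l
  have hyu : y ≠ u := by
    rintro rfl
    rw [Walk.isPath_iff_eq_nil] at hδ1p; rw [hδ1p] at hδ1l; simp at hδ1l; omega
  have hyne_v : y ≠ v := hyv.ne
  have hyβ : y ∈ β.support := by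
    rw [hβsplit, Walk.mem_support_append_iff]; exact Or.inl δ1.end_mem_support
  have hyA' : y ∈ A'.verts := hβA' y hyβ
  have hyA : y ∉ A.verts := hIB y hyβ hyu hyne_v
  -- distance from x to y is m - 1
  have hdist_vy : G.dist v y ≤ 1 := by
    have := SimpleGraph.dist_le (Walk.cons hyv.symm Walk.nil : G.Walk v y)
    simpa using this
  have htri : G.dist v x ≤ G.dist v y + G.dist y x := hconn.dist_triangle
  have hcomm : G.dist y x = G.dist x y := SimpleGraph.dist_comm
  have hxyle : G.dist x y ≤ m := hdiam x y
  have hxyne : G.dist x y ≠ m := by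
    intro hEq
    obtain ⟨g, hgl⟩ := hconn.exists_walk_length_eq_dist x y
    have h1 := GP.walk_parity c hc g
    have h2 := GP.walk_parity c hc P
    have h3 := hc hyv
    rw [hgl, hEq] at h1
    rw [hPl] at h2
    have h4 : (c v = c x) = (c x = c y) := propext (h2.trans h1.symm)
    refine h3 ?_
    cases hbv : c v <;> cases hbx : c x <;> cases hby : c y <;>
      rw [hbv, hbx, hby] at h4 <;> simp at h4 ⊢ <;> simp [h4]
  have hdxy : G.dist x y = m - 1 := by omega
  -- the geodesic ρ from x to y
  obtain ⟨w0, hw0⟩ := hconn.exists_walk_length_eq_dist x y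
  set ρ : G.Walk x y := w0.bypass with hρdef
  have hρp : ρ.IsPath := w0.bypass_isPath
  have hρl : ρ.length = m - 1 := by
    have h1 : ρ.length ≤ w0.length := w0.length_bypass_le
    have h2 : G.dist x y ≤ ρ.length := SimpleGraph.dist_le ρ
    omega
  have hvρ : v ∉ ρ.support := by
    intro hmem
    have h1 := Walk.length_takeUntil_le ρ hmem
    have h2 : G.dist x v ≤ (ρ.takeUntil v hmem).length := SimpleGraph.dist_le _
    have h3 : G.dist x v = m := by rw [SimpleGraph.dist_comm]; exact hdvx
    omega
  -- short arcs inside A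
  have harc : ∀ z, z ∈ A.verts → z ≠ v →
      ∃ P2 : G.Walk z v, P2.IsPath ∧ P2.length ≤ m ∧ ∀ t ∈ P2.support, t ∈ A.verts := by
    intro z hzA hzv
    have hz' : z ∈ γ.support ∨ z ∈ α.support := by
      rw [← hαsub, Subgraph.verts_sup] at hzA
      rcases hzA with h | h
      · exact Or.inl (γ.mem_verts_toSubgraph.mp h)
      · exact Or.inr (α.mem_verts_toSubgraph.mp h)
    rcases hz' with hz | hz
    · refine ⟨γ.dropUntil z hz, hγp.dropUntil hz, ?_, ?_⟩
      · have h := congrArg Walk.length (γ.take_spec hz)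
        rw [Walk.length_append] at h; omega
      · intro t ht; exact hγA t (Walk.support_dropUntil_subset γ hz ht)
    · have hζspec := α.take_spec hz
      set ζ1 := α.takeUntil z hz with hζ1def
      set ζ2 := α.dropUntil z hz with hζ2def
      have hζsum : ζ1.length + ζ2.length = 2 * m - l := by
        have h := congrArg Walk.length hζspec; rw [Walk.length_append] at h; omega
      have hζ1p : ζ1.IsPath := hαp.takeUntil hz
      have hζ2p : ζ2.IsPath := hαp.dropUntil hz
      by_cases hc2 : ζ2.length ≤ m
      · exact ⟨ζ2, hζ2p, hc2, fun t ht => hαA t (Walk.support_dropUntil_subset α hz ht)⟩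
      · have hvζ1 : v ∉ ζ1.support := by
          intro hmem
          have hns := hαp.support_nodup
          rw [← hζspec, Walk.support_append, List.nodup_append] at hns
          refine hns.2.2 _ hmem _ ?_ rfl
          have h2 : v ∈ ζ2.support := ζ2.end_mem_support
          rw [ζ2.support_eq_cons] at h2
          rcases List.mem_cons.mp h2 with h | h
          · exact absurd h.symm hzv
          · exact h
        refine ⟨ζ1.reverse.append γ, ?_, ?_, ?_⟩
        · apply GP.append_isPath hζ1p.reverse hγp
          intro t ht1 ht2
          rw [Walk.support_reverse, List.mem_reverse] at ht1
          rcases hαint t ht2 (Walk.support_takeUntil_subset α hz ht1) with rfl | rfl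
          · rfl
          · exact absurd ht1 hvζ1
        · rw [Walk.length_append, Walk.length_reverse]; omega
        · intro t ht
          rw [Walk.mem_support_append_iff] at ht
          rcases ht with ht | ht
          · rw [Walk.support_reverse, List.mem_reverse] at ht
            exact hαA t (Walk.support_takeUntil_subset α hz ht)
          · exact hγA t ht
  -- the edge walk from y to v
  set ew : G.Walk y v := Walk.cons hyv Walk.nil with hewdef
  have hewp : ew.IsPath := by
    rw [hewdef, Walk.isPath_def]
    simp [hyne_v]
  -- the interior of ρ avoids A
  have hRA : ∀ z ∈ ρ.support, z ≠ x → z ∉ A.verts := by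
    intro z hz hzx hzA
    have hzv : z ≠ v := fun h => hvρ (h ▸ hz)
    have hspec := ρ.take_spec hz
    set ρa := ρ.takeUntil z hz with hρadef
    set ρb := ρ.dropUntil z hz with hρbdef
    have hρasum : ρa.length + ρb.length = m - 1 := by
      have h := congrArg Walk.length hspec; rw [Walk.length_append] at h; omega
    have ha1 : 1 ≤ ρa.length := by
      rcases Nat.eq_zero_or_pos ρa.length with h | h
      · exact absurd (Walk.eq_of_length_eq_zero h).symm hzx
      · exact h
    have hρbp : ρb.IsPath := hρp.dropUntil hz
    have hvρb : v ∉ ρb.support := fun h => hvρ (Walk.support_dropUntil_subset ρ hz h)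
    have hP1p : (ρb.append ew).IsPath := by
      apply GP.append_isPath hρbp hewp
      intro t ht1 ht2
      rw [hewdef] at ht2
      simp only [Walk.support_cons, Walk.support_nil, List.mem_cons, List.not_mem_nil,
        or_false] at ht2
      rcases ht2 with rfl | rfl
      · rfl
      · exact absurd ht1 hvρb
    have hP1l : (ρb.append ew).length = ρb.length + 1 := by
      rw [Walk.length_append, hewdef]; simp
    obtain ⟨P2, hP2p, hP2l, hP2A⟩ := harc z hzA hzv
    have hyP2 : y ∉ P2.support := fun h => hyA (hP2A y h)
    have hP1P2 : ρb.append ew ≠ P2 := by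
      intro h
      apply hyP2
      rw [← h, Walk.mem_support_append_iff]
      right
      rw [hewdef]; simp
    have := GP.two_paths_length hgirth (ρb.append ew) P2 hP1p hP2p hP1P2
    omega
  -- first point of ρ lying in A'
  obtain ⟨w₁, ρ1, ρ2, hρsplit, hw₁A', hmin⟩ := GP.exists_first_hit A'.verts ρ hyA'
  have hw₁A'2 : w₁ ∈ A'.verts := hw₁A'
  have hρp2 : (ρ1.append ρ2).IsPath := hρsplit ▸ hρp
  have hρ1p : ρ1.IsPath := hρp2.of_append_left
  have hρ2p : ρ2.IsPath := hρp2.of_append_right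
  have hsum12 : ρ1.length + ρ2.length = m - 1 := by
    have h := congrArg Walk.length hρsplit; rw [Walk.length_append] at h; omega
  have hw₁x : w₁ ≠ x := fun h => hxA' (h ▸ hw₁A')
  have ha1 : 1 ≤ ρ1.length := by
    rcases Nat.eq_zero_or_pos ρ1.length with h | h
    · exact absurd (Walk.eq_of_length_eq_zero h).symm hw₁x
    · exact h
  have hρ1ρ : ∀ t ∈ ρ1.support, t ∈ ρ.support := by
    intro t ht; rw [hρsplit, Walk.mem_support_append_iff]; exact Or.inl ht
  have hw₁ρ : w₁ ∈ ρ.support := hρ1ρ w₁ ρ1.end_mem_support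
  have hw₁v : w₁ ≠ v := fun h => hvρ (h ▸ hw₁ρ)
  have hw₁A : w₁ ∉ A.verts := hRA w₁ hw₁ρ hw₁x
  have hw₁u : w₁ ≠ u := fun h => hw₁A (h ▸ huA)
  have hw₁β : w₁ ∈ β.support := by
    rw [← hβsub, Subgraph.verts_sup] at hw₁A'
    rcases hw₁A' with h | h
    · exact absurd (hγA w₁ (γ.mem_verts_toSubgraph.mp h)) hw₁A
    · exact β.mem_verts_toSubgraph.mp h
  -- split β at w₁
  have hβspec := β.take_spec hw₁β
  set η1 := β.takeUntil w₁ hw₁β with hη1def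
  set η2 := β.dropUntil w₁ hw₁β with hη2def
  have hη1p : η1.IsPath := hβp.takeUntil hw₁β
  have hη2p : η2.IsPath := hβp.dropUntil hw₁β
  have hηsum : η1.length + η2.length = 2 * m - l := by
    have h := congrArg Walk.length hβspec; rw [Walk.length_append] at h; omega
  have hβnodup := hβp.support_nodup
  rw [← hβspec, Walk.support_append, List.nodup_append] at hβnodup
  have hvη1 : v ∉ η1.support := by
    intro hmem
    refine hβnodup.2.2 _ hmem _ ?_ rfl
    have h2 : v ∈ η2.support := η2.end_mem_support
    rw [η2.support_eq_cons] at h2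
    rcases List.mem_cons.mp h2 with h | h
    · exact absurd h.symm hw₁v
    · exact h
  have huη2 : u ∉ η2.support := by
    intro hmem
    rw [η2.support_eq_cons] at hmem
    rcases List.mem_cons.mp hmem with h | h
    · exact hw₁u h.symm
    · exact hβnodup.2.2 _ η1.start_mem_support _ h rfl
  have hη2β : ∀ t ∈ η2.support, t ∈ β.support := by
    intro t ht; rw [← hβspec, Walk.mem_support_append_iff]; exact Or.inr ht
  have hη2A' : ∀ t ∈ η2.support, t ∈ A'.verts := fun t ht => hβA' t (hη2β t ht)
  -- the tail ρ2 + edge equals η2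
  have hvρ2 : v ∉ ρ2.support := by
    intro h
    exact hvρ (by rw [hρsplit, Walk.mem_support_append_iff]; exact Or.inr h)
  have hP1p : (ρ2.append ew).IsPath := by
    apply GP.append_isPath hρ2p hewp
    intro t ht1 ht2
    rw [hewdef] at ht2
    simp only [Walk.support_cons, Walk.support_nil, List.mem_cons, List.not_mem_nil,
      or_false] at ht2
    rcases ht2 with rfl | rfl
    · rfl
    · exact absurd ht1 hvρ2
  have hP1l : (ρ2.append ew).length = ρ2.length + 1 := by
    rw [Walk.length_append, hewdef]; simp
  have hQ2p : (η1.reverse.append γ).IsPath := by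
    apply GP.append_isPath hη1p.reverse hγp
    intro t ht1 ht2
    rw [Walk.support_reverse, List.mem_reverse] at ht1
    rcases hβint t ht2 (Walk.support_takeUntil_subset β hw₁β ht1) with rfl | rfl
    · rfl
    · exact absurd ht1 hvη1
  have hQ2l : (η1.reverse.append γ).length = η1.length + l := by
    rw [Walk.length_append, Walk.length_reverse]; omega
  have hP1η2 : ρ2.append ew = η2 := by
    have hcases : ρ2.append ew = η2 ∨ ρ2.append ew = η1.reverse.append γ := by
      by_contra hcon
      push_neg at hcon
      have h1 := GP.two_paths_length hgirth (ρ2.append ew) η2 hP1p hη2p hcon.1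
      have h2 := GP.two_paths_length hgirth (ρ2.append ew) (η1.reverse.append γ) hP1p hQ2p hcon.2
      omega
    rcases hcases with h | h
    · exact h
    · exfalso
      have huQ2 : u ∈ (η1.reverse.append γ).support := by
        rw [Walk.mem_support_append_iff]; exact Or.inr γ.start_mem_support
      rw [← h, Walk.mem_support_append_iff] at huQ2
      rcases huQ2 with h' | h'
      · have hu_in : u ∈ ρ.support := by
          rw [hρsplit, Walk.mem_support_append_iff]; exact Or.inr h'
        have hux : u ≠ x := fun he => hxA' (he ▸ huA')
        exact hRA u hu_in hux huA
      · rw [hewdef] at h'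
        simp only [Walk.support_cons, Walk.support_nil, List.mem_cons, List.not_mem_nil,
          or_false] at h'
        rcases h' with h' | h'
        · exact hyu h'.symm
        · exact huv h'
  have hη2l : η2.length = ρ2.length + 1 := by rw [← hP1η2, hP1l]
  -- the new cycle W
  set W : G.Walk v v := γ.reverse.append (α1.append (ρ1.append η2)) with hWdef
  have hWl : W.length = 2 * m := by
    rw [hWdef]
    simp only [Walk.length_append, Walk.length_reverse]
    omega
  -- disjointness facts
  have F12 : ∀ t, t ∈ γ.support → t ∈ α1.support → t = u := by
    intro t h1 h2
    rcases hαint t h1 (hα1sub t h2) with rfl | rfl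
    · rfl
    · exact absurd h2 hvα1
  have F13 : ∀ t, t ∈ γ.support → t ∈ ρ1.support → False := by
    intro t h1 h2
    by_cases htx : t = x
    · rw [htx] at h1; exact hxA' (hγA' x h1)
    · exact hRA t (hρ1ρ t h2) htx (hγA t h1)
  have F14 : ∀ t, t ∈ γ.support → t ∈ η2.support → t = v := by
    intro t h1 h2
    rcases hβint t h1 (hη2β t h2) with rfl | rfl
    · exact absurd h2 huη2
    · rfl
  have F23 : ∀ t, t ∈ α1.support → t ∈ ρ1.support → t = x := by
    intro t h1 h2
    by_contra htx
    exact hRA t (hρ1ρ t h2) htx (hαA t (hα1sub t h1))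
  have F24 : ∀ t, t ∈ α1.support → t ∈ η2.support → False := by
    intro t h1 h2
    have hγt : t ∈ γ.support := hmemγ t (hαA t (hα1sub t h1)) (hη2A' t h2)
    have e1 := F12 t hγt h1
    have e2 := F14 t hγt h2
    exact huv (e1 ▸ e2)
  have F34 : ∀ t, t ∈ ρ1.support → t ∈ η2.support → t = w₁ := by
    intro t h1 h2
    by_contra htw
    exact hmin t h1 htw (hη2A' t h2)
  -- W is a cycle
  have htail : W.support.tail =
      γ.reverse.support.tail ++ (α1.support.tail ++ (ρ1.support.tail ++ η2.support.tail)) := by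
    rw [hWdef, Walk.tail_support_append, Walk.tail_support_append, Walk.tail_support_append]
  have hγrtail : ∀ t ∈ γ.reverse.support.tail, t ∈ γ.support ∧ t ≠ v := by
    intro t ht
    obtain ⟨h1, h2⟩ := GP.mem_tail_of_path hγp.reverse ht
    rw [Walk.support_reverse, List.mem_reverse] at h1
    exact ⟨h1, h2⟩
  have hα1tail : ∀ t ∈ α1.support.tail, t ∈ α1.support ∧ t ≠ u :=
    fun t ht => GP.mem_tail_of_path hα1p ht
  have hρ1tail : ∀ t ∈ ρ1.support.tail, t ∈ ρ1.support ∧ t ≠ x :=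
    fun t ht => GP.mem_tail_of_path hρ1p ht
  have hη2tail : ∀ t ∈ η2.support.tail, t ∈ η2.support ∧ t ≠ w₁ :=
    fun t ht => GP.mem_tail_of_path hη2p ht
  have hWtailnodup : W.support.tail.Nodup := by
    rw [htail]
    refine List.Nodup.append (GP.tail_nodup_of_path hγp.reverse)
      (List.Nodup.append (GP.tail_nodup_of_path hα1p)
        (List.Nodup.append (GP.tail_nodup_of_path hρ1p) (GP.tail_nodup_of_path hη2p) ?_) ?_) ?_
    · intro t h1 h2
      exact (hη2tail t h2).2 (F34 t (hρ1tail t h1).1 (hη2tail t h2).1)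
    · rw [List.disjoint_append_right]
      constructor
      · intro t h1 h2
        exact (hρ1tail t h2).2 (F23 t (hα1tail t h1).1 (hρ1tail t h2).1)
      · intro t h1 h2
        exact F24 t (hα1tail t h1).1 (hη2tail t h2).1
    · rw [List.disjoint_append_right, List.disjoint_append_right]
      refine ⟨?_, ?_, ?_⟩
      · intro t h1 h2
        exact (hα1tail t h2).2 (F12 t (hγrtail t h1).1 (hα1tail t h2).1)
      · intro t h1 h2
        exact F13 t (hγrtail t h1).1 (hρ1tail t h2).1
      · intro t h1 h2
        exact (hγrtail t h1).2 (F14 t (hγrtail t h1).1 (hη2tail t h2).1)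
  have hα1edges : ∀ e ∈ α1.edges, e ∈ α.edges := by
    intro e he; rw [hαsplit, Walk.edges_append, List.mem_append]; exact Or.inl he
  have hWedgesnodup : W.edges.Nodup := by
    have hedges : W.edges = γ.reverse.edges ++ (α1.edges ++ (ρ1.edges ++ η2.edges)) := by
      rw [hWdef, Walk.edges_append, Walk.edges_append, Walk.edges_append]
    rw [hedges]
    refine List.Nodup.append hγp.reverse.edges_nodup
      (List.Nodup.append hα1p.edges_nodup
        (List.Nodup.append hρ1p.edges_nodup hη2p.edges_nodup ?_) ?_) ?_
    · exact GP.no_common_edge (z := w₁) F34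
    · rw [List.disjoint_append_right]
      exact ⟨GP.no_common_edge (z := x) F23,
        GP.no_common_edge (z := u) (fun t h1 h2 => (F24 t h1 h2).elim)⟩
    · rw [List.disjoint_append_right, List.disjoint_append_right]
      refine ⟨?_, ?_, ?_⟩
      · intro e h1 h2
        rw [Walk.edges_reverse, List.mem_reverse] at h1
        exact hαed e h1 (hα1edges e h2)
      · intro e h1 h2
        rw [Walk.edges_reverse, List.mem_reverse] at h1
        exact GP.no_common_edge (z := u) (fun t ha hb => (F13 t ha hb).elim) e h1 h2
      · intro e h1 h2
        rw [Walk.edges_reverse, List.mem_reverse] at h1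
        exact GP.no_common_edge (z := v) F14 e h1 h2
  have hWnil : W ≠ Walk.nil := by
    intro h
    have h2 := congrArg Walk.length h
    rw [hWl] at h2; simp at h2; omega
  have hWcyc : W.IsCycle := ⟨⟨⟨hWedgesnodup⟩, hWnil⟩, hWtailnodup⟩
  -- subgraph computations
  have hWsub : W.toSubgraph =
      γ.toSubgraph ⊔ (α1.toSubgraph ⊔ (ρ1.toSubgraph ⊔ η2.toSubgraph)) := by
    rw [hWdef, Walk.toSubgraph_append, Walk.toSubgraph_append, Walk.toSubgraph_append,
      Walk.toSubgraph_reverse]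
  have hγle : γ.toSubgraph ≤ A := by rw [← hαsub]; exact le_sup_left
  have hγle' : γ.toSubgraph ≤ A' := by rw [← hβsub]; exact le_sup_left
  have hα1le : α1.toSubgraph ≤ A := by
    rw [← hαsub]
    refine le_sup_of_le_right ?_
    rw [hαsplit, Walk.toSubgraph_append]
    exact le_sup_left
  have hη2le : η2.toSubgraph ≤ A' := by
    rw [← hβsub]
    refine le_sup_of_le_right ?_
    rw [← hβspec, Walk.toSubgraph_append]
    exact le_sup_right
  have hsing1 : A ⊓ ρ1.toSubgraph = G.singletonSubgraph x := by
    refine GP.inf_toSubgraph_eq_singleton hxA ρ1.start_mem_support ?_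
    intro t ht hA2
    by_contra htx
    exact hRA t (hρ1ρ t ht) htx hA2
  have hsing2 : A ⊓ η2.toSubgraph = G.singletonSubgraph v := by
    refine GP.inf_toSubgraph_eq_singleton hvA η2.end_mem_support ?_
    intro t ht hA2
    exact F14 t (hmemγ t hA2 (hη2A' t ht)) ht
  have hsing3 : A' ⊓ α1.toSubgraph = G.singletonSubgraph u := by
    refine GP.inf_toSubgraph_eq_singleton huA' α1.start_mem_support ?_
    intro t ht hA2
    exact F12 t (hmemγ t (hαA t (hα1sub t ht)) hA2) ht
  have hsing4 : A' ⊓ ρ1.toSubgraph = G.singletonSubgraph w₁ := by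
    refine GP.inf_toSubgraph_eq_singleton hw₁A'2 ρ1.end_mem_support ?_
    intro t ht hA2
    by_contra htw
    exact hmin t ht htw hA2
  have hAinf : A ⊓ W.toSubgraph = P.toSubgraph := by
    have hPsub : P.toSubgraph = γ.toSubgraph ⊔ α1.toSubgraph := by
      rw [hPdef, Walk.toSubgraph_append, Walk.toSubgraph_reverse]
    rw [hWsub, inf_sup_left, inf_sup_left, inf_sup_left,
      inf_eq_right.mpr hγle, inf_eq_right.mpr hα1le, hsing1, hsing2, hPsub]
    apply le_antisymm
    · refine sup_le le_sup_left (sup_le le_sup_right (sup_le ?_ ?_))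
      · rw [SimpleGraph.singletonSubgraph_le_iff, Subgraph.verts_sup]
        exact Or.inr α1.end_mem_verts_toSubgraph
      · rw [SimpleGraph.singletonSubgraph_le_iff, Subgraph.verts_sup]
        exact Or.inl γ.end_mem_verts_toSubgraph
    · exact sup_le le_sup_left (le_sup_of_le_right le_sup_left)
  set R : G.Walk u w₁ := γ.append η2.reverse with hRdef
  have hRp : R.IsPath := by
    apply GP.append_isPath hγp hη2p.reverse
    intro t ht1 ht2
    rw [Walk.support_reverse, List.mem_reverse] at ht2
    exact F14 t ht1 ht2
  have hRl : R.length = l + η2.length := by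
    rw [hRdef, Walk.length_append, Walk.length_reverse]; omega
  have hA'inf : A' ⊓ W.toSubgraph = R.toSubgraph := by
    have hRsub : R.toSubgraph = γ.toSubgraph ⊔ η2.toSubgraph := by
      rw [hRdef, Walk.toSubgraph_append, Walk.toSubgraph_reverse]
    rw [hWsub, inf_sup_left, inf_sup_left, inf_sup_left,
      inf_eq_right.mpr hγle', hsing3, hsing4, inf_eq_right.mpr hη2le, hRsub]
    apply le_antisymm
    · refine sup_le le_sup_left (sup_le ?_ (sup_le ?_ le_sup_right))
      · rw [SimpleGraph.singletonSubgraph_le_iff, Subgraph.verts_sup]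
        exact Or.inl γ.start_mem_verts_toSubgraph
      · rw [SimpleGraph.singletonSubgraph_le_iff, Subgraph.verts_sup]
        exact Or.inr η2.start_mem_verts_toSubgraph
    · exact sup_le le_sup_left (le_sup_of_le_right (le_sup_of_le_right le_sup_right))
  have hγleW : γ.toSubgraph ≤ W.toSubgraph := by rw [hWsub]; exact le_sup_left
  exact ⟨W.toSubgraph, ⟨v, W, hWcyc, hWl, rfl⟩, by rw [← hγsub]; exact hγleW,
    ⟨m, hlm, ⟨v, x, P, hPp, hPl, hAinf.symm⟩⟩,
    ⟨l + η2.length, by omega, ⟨u, w₁, R, hRp, hRl, hA'inf.symm⟩⟩⟩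
end

section
/- Let m ≥ 2 and let L be a generalized m-gon. If A₁ and A₂ are apartments of L that share at least one edge, then either A₁ = A₂ or the intersection A₁ ∩ A₂ is a path in L with at most m edges. -/
open SimpleGraph

variable {V : Type*}

namespace ApartmentAux

variable {G : SimpleGraph V}

open SimpleGraph.Walk

lemma closed_path_eq_nil {u : V} {p : G.Walk u u} (hp : p.IsPath) : p = Walk.nil := by
  cases p with
  | nil => rfl
  | cons h q =>
    rw [Walk.cons_isPath_iff] at hp
    exact absurd q.end_mem_support hp.2

lemma end_mem_support_tail {a b : V} (w : G.Walk a b) (h : ¬ w.Nil) : b ∈ w.support.tail := by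
  cases w with
  | nil => exact absurd Walk.nil_nil h
  | cons h q => simpa using q.end_mem_support

lemma exists_last_edge {y z : V} (w : G.Walk y z) (h : ¬ w.Nil) :
    ∃ (b : V) (r : G.Walk y b) (g : G.Adj b z), w = r.append (Walk.cons g Walk.nil) := by
  induction w with
  | nil => exact absurd Walk.nil_nil h
  | cons hadj q ih =>
    cases q with
    | nil => exact ⟨_, Walk.nil, hadj, rfl⟩
    | cons hadj2 q2 =>
      obtain ⟨b, r, g, hr⟩ := ih Walk.not_nil_cons
      exact ⟨b, Walk.cons hadj r, g, by rw [hr, Walk.cons_append]⟩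

lemma exists_first_edge {y z : V} (w : G.Walk y z) (h : ¬ w.Nil) :
    ∃ (b : V) (g : G.Adj y b) (r : G.Walk b z), w = Walk.cons g r := by
  cases w with
  | nil => exact absurd Walk.nil_nil h
  | cons hadj q => exact ⟨_, hadj, q, rfl⟩

/-- Rotating a closed walk preserves being a cycle. -/
lemma swap_isCycle {u z : V} {R : G.Walk u z} {S : G.Walk z u}
    (h : (R.append S).IsCycle) : (S.append R).IsCycle := by
  obtain ⟨⟨⟨hnodup⟩, hne⟩, htail⟩ := h
  refine ⟨⟨⟨?_⟩, ?_⟩, ?_⟩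
  · rw [Walk.edges_append] at hnodup ⊢
    exact (List.perm_append_comm.nodup_iff).mpr hnodup
  · intro hnil
    have h0 : (S.append R).length = 0 := by rw [hnil]; rfl
    rw [Walk.length_append] at h0
    have h2 : (R.append S).length = 0 := by rw [Walk.length_append]; omega
    exact hne (Walk.nil_iff_eq_nil.mp (Walk.length_eq_zero_iff.mp h2))
  · have h1 : (R.append S).support.tail = R.support.tail ++ S.support.tail := by
      rw [Walk.support_append, R.support_eq_cons]; rfl
    have h2 : (S.append R).support.tail = S.support.tail ++ R.support.tail := by
      rw [Walk.support_append, S.support_eq_cons]; rfl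
    rw [h2]
    rw [h1] at htail
    exact (List.perm_append_comm.nodup_iff).mpr htail

lemma support_tail_ne_nil {z : V} {W : G.Walk z z} (hW : W.IsCycle) : W.support.tail ≠ [] := by
  have h3 := hW.three_le_length
  have : W.support.tail.length = W.length := by
    have := W.length_support
    simp [List.length_tail, this]
  intro h
  rw [h] at this
  simp at this
  omega

lemma support_dropLast_nodup {z : V} {W : G.Walk z z} (hW : W.IsCycle) :
    W.support.dropLast.Nodup := by
  have h1 : W.support.tail ≠ [] := support_tail_ne_nil hW
  have hlast : W.support.tail.getLast h1 = z := by
    rw [List.getLast_tail]; exact W.getLast_support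
  have hsplit : W.support.tail.dropLast ++ [z] = W.support.tail := by
    conv_rhs => rw [← List.dropLast_append_getLast h1, hlast]
  have hnd := hW.support_nodup
  rw [← hsplit, List.nodup_append] at hnd
  have hsup : W.support = (z :: W.support.tail.dropLast) ++ [z] := by
    rw [W.support_eq_cons]
    conv_lhs => rw [← hsplit]
    simp
  rw [hsup, List.dropLast_concat]
  refine List.nodup_cons.mpr ⟨?_, hnd.1⟩
  intro hz
  exact hnd.2.2 _ hz _ (List.mem_singleton_self z) rfl

lemma isCycle_reverse {z : V} {W : G.Walk z z} (hW : W.IsCycle) : W.reverse.IsCycle := by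
  obtain ⟨⟨⟨hnodup⟩, hne⟩, htail⟩ := hW
  refine ⟨⟨⟨?_⟩, ?_⟩, ?_⟩
  · rw [Walk.edges_reverse]; exact List.nodup_reverse.mpr hnodup
  · intro h
    have : W.reverse.length = 0 := by rw [h]; rfl
    rw [Walk.length_reverse] at this
    exact hne (Walk.nil_iff_eq_nil.mp (Walk.length_eq_zero_iff.mp this))
  · have h1 : W.support.tail ≠ [] := support_tail_ne_nil ⟨⟨⟨hnodup⟩, hne⟩, htail⟩
    have hlast : W.support.tail.getLast h1 = z := by
      rw [List.getLast_tail]; exact W.getLast_support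
    have hsplit : W.support.tail.dropLast ++ [z] = W.support.tail := by
      conv_rhs => rw [← List.dropLast_append_getLast h1, hlast]
    have hsup : W.support = (z :: W.support.tail.dropLast) ++ [z] := by
      rw [W.support_eq_cons]
      conv_lhs => rw [← hsplit]
      simp
    have h2 : W.reverse.support.tail = (z :: W.support.tail.dropLast).reverse := by
      rw [Walk.support_reverse, hsup]
      simp
    rw [h2, List.nodup_reverse]
    have h3 := support_dropLast_nodup ⟨⟨⟨hnodup⟩, hne⟩, htail⟩
    rwa [hsup, List.dropLast_concat] at h3

/-- In a cycle based at `z`, there is at most one dart whose second vertex is `z`. -/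
lemma dart_snd_unique {z : V} {W : G.Walk z z} (hW : W.IsCycle) {d₁ d₂ : G.Dart}
    (h₁ : d₁ ∈ W.darts) (h₂ : d₂ ∈ W.darts) (hs₁ : d₁.snd = z) (hs₂ : d₂.snd = z) :
    d₁ = d₂ := by
  have hnd : (W.darts.map (fun d : G.Dart => d.snd)).Nodup := by
    rw [W.map_snd_darts]; exact hW.support_nodup
  exact List.inj_on_of_nodup_map hnd h₁ h₂ (hs₁.trans hs₂.symm)

/-- In a cycle based at `z`, there is at most one dart whose first vertex is `z`. -/
lemma dart_fst_unique {z : V} {W : G.Walk z z} (hW : W.IsCycle) {d₁ d₂ : G.Dart}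
    (h₁ : d₁ ∈ W.darts) (h₂ : d₂ ∈ W.darts) (hs₁ : d₁.fst = z) (hs₂ : d₂.fst = z) :
    d₁ = d₂ := by
  have hnd : (W.darts.map (fun d : G.Dart => d.fst)).Nodup := by
    rw [W.map_fst_darts]; exact support_dropLast_nodup hW
  exact List.inj_on_of_nodup_map hnd h₁ h₂ (hs₁.trans hs₂.symm)

lemma orient_cons {u v : V} {W : G.Walk u u} (hc : W.IsCycle) {d : G.Dart}
    (hd : d ∈ W.darts) (hfst : d.fst = u) (hsnd : d.snd = v) :
    ∃ (h : G.Adj u v) (t : G.Walk v u), W = Walk.cons h t := by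
  cases W with
  | nil => simp at hd
  | @cons _ c _ h t =>
    have hfirst : (⟨(u, c), h⟩ : G.Dart) ∈ (Walk.cons h t).darts := by
      rw [Walk.darts_cons]; exact List.mem_cons_self
    have hdd := dart_fst_unique hc hd hfirst hfst rfl
    have hcv : c = v := by rw [hdd] at hsnd; exact hsnd
    subst hcv
    exact ⟨h, t, rfl⟩

lemma orient [DecidableEq V] {v₀ u v : V} (w : G.Walk v₀ v₀) (hc : w.IsCycle)
    (he : s(u, v) ∈ w.edges) :
    ∃ (W : G.Walk u u) (h : G.Adj u v) (t : G.Walk v u),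
      W = Walk.cons h t ∧ W.IsCycle ∧ W.toSubgraph = w.toSubgraph ∧ W.length = w.length := by
  have hu : u ∈ w.support := w.fst_mem_support_of_mem_edges he
  have hc0 : (w.rotate u hu).IsCycle := hc.rotate hu
  have hsub0 : (w.rotate u hu).toSubgraph = w.toSubgraph := by
    rw [Walk.rotate, Walk.toSubgraph_append, sup_comm, ← Walk.toSubgraph_append,
      Walk.take_spec]
  have hlen0 : (w.rotate u hu).length = w.length := by
    rw [Walk.rotate, Walk.length_append, Nat.add_comm, ← Walk.length_append, Walk.take_spec]
  have he0 : s(u, v) ∈ (w.rotate u hu).edges := ((w.rotate_edges u hu).perm.mem_iff).mpr he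
  rw [Walk.edges] at he0
  obtain ⟨d, hd, hde⟩ := List.mem_map.mp he0
  rcases dart_edge_eq_mk'_iff'.mp hde with ⟨h1, h2⟩ | ⟨h1, h2⟩
  · obtain ⟨h, t, ht⟩ := orient_cons hc0 hd h1 h2
    exact ⟨w.rotate u hu, h, t, ht, hc0, hsub0, hlen0⟩
  · have hdr : d.symm ∈ (w.rotate u hu).reverse.darts := by
      rw [Walk.mem_darts_reverse, Dart.symm_symm]; exact hd
    obtain ⟨h, t, ht⟩ := orient_cons (isCycle_reverse hc0) hdr h2 h1
    exact ⟨(w.rotate u hu).reverse, h, t, ht, isCycle_reverse hc0,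
      by rw [Walk.toSubgraph_reverse, hsub0], by rw [Walk.length_reverse, hlen0]⟩
lemma cons_second_eq {x y a₁ a₂ : V} {h₁ : G.Adj x a₁} {h₂ : G.Adj x a₂}
    {q₁ : G.Walk a₁ y} {q₂ : G.Walk a₂ y}
    (h : (Walk.cons h₁ q₁ : G.Walk x y) = Walk.cons h₂ q₂) : a₁ = a₂ := by
  have h' := congrArg Walk.support h
  rw [Walk.support_cons, Walk.support_cons, q₁.support_eq_cons, q₂.support_eq_cons] at h'
  simp only [List.cons.injEq] at h'
  exact h'.2.1

lemma config_facts {z x a : V} {W : G.Walk z z} {p : G.Walk z x}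
    {h : G.Adj x a} {q : G.Walk a z} (hc : W.IsCycle)
    (hW : W = p.append (Walk.cons h q)) (hp : ¬ p.Nil) :
    W.support = p.support ++ q.support ∧ p.IsPath ∧ (Walk.cons h q).IsPath ∧
      x ∈ p.support.tail ∧ z ∉ p.support.tail ∧ List.Disjoint p.support.tail q.support := by
  have hWs : W.support = p.support ++ q.support := by
    rw [hW, Walk.support_append, Walk.support_cons, List.tail_cons]
  have hWt : W.support.tail = p.support.tail ++ q.support := by
    rw [hWs, p.support_eq_cons]; rfl
  have hnd := hc.support_nodup
  rw [hWt, List.nodup_append] at hnd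
  have hxp : x ∈ p.support.tail := end_mem_support_tail p hp
  have hzp : z ∉ p.support.tail := fun hz => hnd.2.2 _ hz _ q.end_mem_support rfl
  have hppath : p.IsPath := by
    rw [Walk.isPath_def, p.support_eq_cons]
    exact List.nodup_cons.mpr ⟨hzp, hnd.1⟩
  have hQpath : (Walk.cons h q).IsPath := by
    rw [Walk.isPath_def, Walk.support_cons]
    exact List.nodup_cons.mpr ⟨fun hx => hnd.2.2 _ hxp _ hx rfl, hnd.2.1⟩
  exact ⟨hWs, hppath, hQpath, hxp, hzp, fun _ ha hb => hnd.2.2 _ ha _ hb rfl⟩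

lemma fst_dart_case {z x : V} {W : G.Walk z z} {p : G.Walk z x} {Q : G.Walk x z}
    (hc : W.IsCycle) (hppath : p.IsPath) (hW : W = p.append Q) (hp : ¬ p.Nil)
    {d : G.Dart} (hd : d ∈ W.darts) (hf : d.fst = z) (hs : d.snd = x) :
    s(x, z) ∈ p.edges := by
  obtain ⟨w2, hp0, p'', hpc⟩ := exists_first_edge p hp
  have hWc : W = Walk.cons hp0 (p''.append Q) := by rw [hW, hpc, Walk.cons_append]
  have hfmem : (⟨(z, w2), hp0⟩ : G.Dart) ∈ W.darts := by
    rw [hWc, Walk.darts_cons]; exact List.mem_cons_self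
  have hdd := dart_fst_unique hc hd hfmem hf rfl
  rw [hdd] at hs
  have hw2 : w2 = x := hs
  subst hw2
  have hp''path : p''.IsPath := by rw [hpc] at hppath; exact hppath.of_cons
  rw [hpc, closed_path_eq_nil hp''path]
  simp [Sym2.eq_swap]

lemma snd_dart_case {z b : V} {W : G.Walk z z} {r : G.Walk z b} {g : G.Adj b z}
    (hc : W.IsCycle) (hR : W = r.append (Walk.cons g Walk.nil))
    {d : G.Dart} (hd : d ∈ W.darts) (hs : d.snd = z) : d.fst = b := by
  have hmem : (⟨(b, z), g⟩ : G.Dart) ∈ W.darts := by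
    rw [hR, Walk.darts_append]
    exact List.mem_append_right _ (by simp)
  rw [dart_snd_unique hc hd hmem hs rfl]

/-- Two distinct paths with the same endpoints yield a cycle of length at most
the sum of their lengths. -/
lemma cycle_of_two_paths [DecidableEq V] (n : ℕ) {x y : V} (p₁ p₂ : G.Walk x y)
    (h₁ : p₁.IsPath) (h₂ : p₂.IsPath) (hne : p₁ ≠ p₂)
    (hn : 2 * (p₁.length + p₂.length) + p₁.length ≤ n) :
    ∃ (z : V) (c : G.Walk z z), c.IsCycle ∧ c.length ≤ p₁.length + p₂.length := by
  induction n using Nat.strong_induction_on generalizing x y with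
  | _ n ih =>
  by_cases hxy : x = y
  · subst hxy
    exact absurd ((closed_path_eq_nil h₁).trans (closed_path_eq_nil h₂).symm) hne
  cases p₁ with
  | nil => exact absurd rfl hxy
  | @cons _ a₁ _ ha₁ t₁ =>
    cases p₂ with
    | nil => exact absurd rfl hxy
    | @cons _ a₂ _ ha₂ t₂ =>
      rw [Walk.cons_isPath_iff] at h₁ h₂
      by_cases haa : a₁ = a₂
      · subst haa
        have hT : t₁ ≠ t₂ := by
          intro h; exact hne (by rw [h])
        have hlt : 2 * (t₁.length + t₂.length) + t₁.length < n := by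
          simp only [Walk.length_cons] at hn; omega
        obtain ⟨z, c, hc, hcl⟩ := ih _ hlt t₁ t₂ h₁.1 h₂.1 hT le_rfl
        exact ⟨z, c, hc, by simp only [Walk.length_cons]; omega⟩
      · by_cases hmem : a₁ ∈ t₂.support
        · -- build a cycle through x, a₁ and part of p₂
          have hTpath : (t₂.takeUntil a₁ hmem).IsPath := h₂.1.takeUntil hmem
          have hxT : x ∉ (t₂.takeUntil a₁ hmem).support :=
            fun h => h₂.2 (t₂.support_takeUntil_subset hmem h)
          have hP2' : (Walk.cons ha₂ (t₂.takeUntil a₁ hmem)).IsPath :=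
            (Walk.cons_isPath_iff _ _).mpr ⟨hTpath, hxT⟩
          refine ⟨x, Walk.cons ha₁ (Walk.cons ha₂ (t₂.takeUntil a₁ hmem)).reverse, ?_, ?_⟩
          · rw [Walk.cons_isCycle_iff]
            refine ⟨hP2'.reverse, ?_⟩
            rw [Walk.edges_reverse, List.mem_reverse, Walk.edges_cons]
            intro hmem'
            rcases List.mem_cons.mp hmem' with h | h
            · rw [Sym2.congr_right] at h
              exact haa h
            · exact h₂.2 (t₂.fst_mem_support_of_mem_edges (t₂.edges_takeUntil_subset hmem h))
          · simp only [Walk.length_cons, Walk.length_reverse]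
            have := t₂.length_takeUntil_le hmem
            omega
        · -- a₁ avoids p₂ : prepend the edge to p₂ and recurse
          have hpath2' : (Walk.cons ha₁.symm (Walk.cons ha₂ t₂)).IsPath := by
            rw [Walk.cons_isPath_iff]
            refine ⟨(Walk.cons_isPath_iff _ _).mpr ⟨h₂.1, h₂.2⟩, ?_⟩
            simp only [Walk.support_cons, List.mem_cons]
            push_neg
            exact ⟨ha₁.ne', hmem⟩
          have hne' : t₁ ≠ Walk.cons ha₁.symm (Walk.cons ha₂ t₂) := by
            intro h
            have : x ∈ t₁.support := by rw [h]; simp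
            exact h₁.2 this
          have hlt : 2 * (t₁.length + (Walk.cons ha₁.symm (Walk.cons ha₂ t₂)).length)
              + t₁.length < n := by
            simp only [Walk.length_cons] at hn ⊢; omega
          obtain ⟨z, c, hc, hcl⟩ := ih _ hlt t₁ _ h₁.1 hpath2' hne' le_rfl
          refine ⟨z, c, hc, ?_⟩
          simp only [Walk.length_cons] at hcl ⊢
          omega

/-- Two different walks with the same endpoints and the same length diverge after a
common prefix. -/
lemma exists_divergence {x y : V} (w₁ : G.Walk x y) : ∀ (w₂ : G.Walk x y), w₁.length = w₂.length →
    w₁ = w₂ ∨ ∃ (c : V) (p : G.Walk x c) (a₁ a₂ : V) (h₁ : G.Adj c a₁) (h₂ : G.Adj c a₂)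
      (q₁ : G.Walk a₁ y) (q₂ : G.Walk a₂ y), a₁ ≠ a₂ ∧
      w₁ = p.append (Walk.cons h₁ q₁) ∧ w₂ = p.append (Walk.cons h₂ q₂) := by
  induction w₁ with
  | nil =>
    intro w₂ hlen
    left
    have : w₂.length = 0 := by simp at hlen; omega
    exact (Walk.nil_iff_eq_nil.mp (Walk.length_eq_zero_iff.mp this)).symm
  | @cons u b w h t ih =>
    intro w₂ hlen
    cases w₂ with
    | nil => simp at hlen
    | @cons _ b' _ h' t' =>
      by_cases hbb : b = b'
      · subst hbb
        rcases ih t' (by simpa using hlen) with rfl | ⟨c, p, a₁, a₂, g₁, g₂, q₁, q₂, hne, e₁, e₂⟩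
        · left; rfl
        · right
          exact ⟨c, Walk.cons h p, a₁, a₂, g₁, g₂, q₁, q₂, hne,
            by rw [e₁, Walk.cons_append], by rw [e₂, Walk.cons_append]⟩
      · right
        exact ⟨u, Walk.nil, b, b', h, h', t, t', hbb,
          by rw [Walk.nil_append], by rw [Walk.nil_append]⟩

lemma main_config [DecidableEq V] {m : ℕ} (hm : 2 ≤ m)
    (hgirth : ∀ (w : V) (c : G.Walk w w), c.IsCycle → 2 * m ≤ c.length)
    {z x a₁ a₂ b₁ b₂ : V}
    {W₁ W₂ : G.Walk z z} (hc₁ : W₁.IsCycle) (hc₂ : W₂.IsCycle)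
    (hl₁ : W₁.length = 2 * m) (hl₂ : W₂.length = 2 * m)
    {p : G.Walk z x} {h₁ : G.Adj x a₁} {h₂ : G.Adj x a₂}
    {q₁ : G.Walk a₁ z} {q₂ : G.Walk a₂ z} (haa : a₁ ≠ a₂)
    (hW₁ : W₁ = p.append (Walk.cons h₁ q₁)) (hW₂ : W₂ = p.append (Walk.cons h₂ q₂))
    (hp : ¬ p.Nil)
    {r₁ : G.Walk z b₁} {r₂ : G.Walk z b₂} {g₁ : G.Adj b₁ z} {g₂ : G.Adj b₂ z} (hbb : b₁ ≠ b₂)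
    (hR₁ : W₁ = r₁.append (Walk.cons g₁ Walk.nil)) (hR₂ : W₂ = r₂.append (Walk.cons g₂ Walk.nil)) :
    ∃ l : ℕ, l ≤ m ∧ ∃ (c c' : V) (pp : G.Walk c c'), pp.IsPath ∧ pp.length = l ∧
      pp.toSubgraph = W₁.toSubgraph ⊓ W₂.toSubgraph := by
  obtain ⟨hWs₁, hppath, hQ₁path, hxp, hzp, hdisj₁⟩ := config_facts hc₁ hW₁ hp
  obtain ⟨hWs₂, -, hQ₂path, -, -, hdisj₂⟩ := config_facts hc₂ hW₂ hp
  have hplen : p.length ≠ 0 := fun h0 => hp (Walk.nil_iff_length_eq.mpr h0)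
  have hlen₁ : p.length + (q₁.length + 1) = 2 * m := by
    rw [hW₁, Walk.length_append, Walk.length_cons] at hl₁; omega
  have hlen₂ : p.length + (q₂.length + 1) = 2 * m := by
    rw [hW₂, Walk.length_append, Walk.length_cons] at hl₂; omega
  have hql : q₁.length = q₂.length := by omega
  -- Step A : the common prefix has at most m edges
  have hlm : p.length ≤ m := by
    by_contra hcon
    push_neg at hcon
    have hQne : (Walk.cons h₁ q₁ : G.Walk x z) ≠ Walk.cons h₂ q₂ :=
      fun heq => haa (cons_second_eq heq)
    obtain ⟨z', c, hcyc, hclen⟩ := cycle_of_two_paths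
      (2 * ((Walk.cons h₁ q₁).length + (Walk.cons h₂ q₂).length) + (Walk.cons h₁ q₁).length)
      (Walk.cons h₁ q₁) (Walk.cons h₂ q₂) hQ₁path hQ₂path hQne le_rfl
    have := hgirth z' c hcyc
    simp only [Walk.length_cons] at hclen
    omega
  -- Step B : common vertices lie on the common prefix
  have hq₁path : q₁.IsPath := hQ₁path.of_cons
  have hq₂path : q₂.IsPath := hQ₂path.of_cons
  have hxq₁ : x ∉ q₁.support := by
    rw [Walk.cons_isPath_iff] at hQ₁path; exact hQ₁path.2
  have hxq₂ : x ∉ q₂.support := by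
    rw [Walk.cons_isPath_iff] at hQ₂path; exact hQ₂path.2
  have hkey : ∀ y, y ∈ W₁.support → y ∈ W₂.support → y ∈ p.support := by
    intro y hy1 hy2
    by_contra hyp
    have hyq₁ : y ∈ q₁.support := by
      rw [hWs₁] at hy1
      rcases List.mem_append.mp hy1 with h | h
      · exact absurd h hyp
      · exact h
    have hyq₂ : y ∈ q₂.support := by
      rw [hWs₂] at hy2
      rcases List.mem_append.mp hy2 with h | h
      · exact absurd h hyp
      · exact h
    have hyz : y ≠ z := fun h => hyp (h ▸ p.start_mem_support)
    -- the two prefixes and the two suffixes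
    have ht₁path : (Walk.cons h₁ (q₁.takeUntil y hyq₁)).IsPath := by
      rw [Walk.cons_isPath_iff]
      exact ⟨hq₁path.takeUntil hyq₁, fun hx => hxq₁ (q₁.support_takeUntil_subset hyq₁ hx)⟩
    have ht₂path : (Walk.cons h₂ (q₂.takeUntil y hyq₂)).IsPath := by
      rw [Walk.cons_isPath_iff]
      exact ⟨hq₂path.takeUntil hyq₂, fun hx => hxq₂ (q₂.support_takeUntil_subset hyq₂ hx)⟩
    have hs₁path : (q₁.dropUntil y hyq₁).IsPath := hq₁path.dropUntil hyq₁
    have hs₂path : (q₂.dropUntil y hyq₂).IsPath := hq₂path.dropUntil hyq₂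
    have hsum₁ : (q₁.takeUntil y hyq₁).length + (q₁.dropUntil y hyq₁).length = q₁.length := by
      have := congrArg Walk.length (q₁.take_spec hyq₁)
      rwa [Walk.length_append] at this
    have hsum₂ : (q₂.takeUntil y hyq₂).length + (q₂.dropUntil y hyq₂).length = q₂.length := by
      have := congrArg Walk.length (q₂.take_spec hyq₂)
      rwa [Walk.length_append] at this
    have ht_ne : (Walk.cons h₁ (q₁.takeUntil y hyq₁) : G.Walk x y)
        ≠ Walk.cons h₂ (q₂.takeUntil y hyq₂) := fun heq => haa (cons_second_eq heq)
    have hs_ne : q₁.dropUntil y hyq₁ ≠ q₂.dropUntil y hyq₂ := by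
      intro heq
      obtain ⟨b, r, g, hbr⟩ := exists_last_edge (q₁.dropUntil y hyq₁) (Walk.not_nil_of_ne hyz)
      have hds : (⟨(b, z), g⟩ : G.Dart) ∈ (q₁.dropUntil y hyq₁).darts := by
        rw [hbr, Walk.darts_append]
        exact List.mem_append_right _ (by simp)
      have hd1 : (⟨(b, z), g⟩ : G.Dart) ∈ W₁.darts := by
        rw [hW₁, Walk.darts_append, Walk.darts_cons]
        refine List.mem_append_right _ (List.mem_cons_of_mem _ ?_)
        rw [← q₁.take_spec hyq₁, Walk.darts_append]
        exact List.mem_append_right _ hds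
      have hd2 : (⟨(b, z), g⟩ : G.Dart) ∈ W₂.darts := by
        rw [hW₂, Walk.darts_append, Walk.darts_cons]
        refine List.mem_append_right _ (List.mem_cons_of_mem _ ?_)
        rw [← q₂.take_spec hyq₂, Walk.darts_append]
        refine List.mem_append_right _ ?_
        rw [← heq]
        exact hds
      have hb1 : b = b₁ := snd_dart_case hc₁ hR₁ hd1 rfl
      have hb2 : b = b₂ := snd_dart_case hc₂ hR₂ hd2 rfl
      exact hbb (hb1 ▸ hb2 ▸ rfl)
    have hcases : (Walk.cons h₁ (q₁.takeUntil y hyq₁)).length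
          + (Walk.cons h₂ (q₂.takeUntil y hyq₂)).length ≤ q₁.length + 1
        ∨ (q₁.dropUntil y hyq₁).length + (q₂.dropUntil y hyq₂).length ≤ q₁.length + 1 := by
      simp only [Walk.length_cons]
      omega
    rcases hcases with hc' | hc'
    · obtain ⟨z', c, hcyc, hclen⟩ := cycle_of_two_paths
        (2 * ((Walk.cons h₁ (q₁.takeUntil y hyq₁)).length
          + (Walk.cons h₂ (q₂.takeUntil y hyq₂)).length)
          + (Walk.cons h₁ (q₁.takeUntil y hyq₁)).length)
        _ _ ht₁path ht₂path ht_ne le_rfl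
      have := hgirth z' c hcyc
      omega
    · obtain ⟨z', c, hcyc, hclen⟩ := cycle_of_two_paths
        (2 * ((q₁.dropUntil y hyq₁).length + (q₂.dropUntil y hyq₂).length)
          + (q₁.dropUntil y hyq₁).length)
        _ _ hs₁path hs₂path hs_ne le_rfl
      have := hgirth z' c hcyc
      omega
  -- Step C : common edges lie on the common prefix
  have hfalse : s(x, z) ∈ W₁.edges → s(x, z) ∈ W₂.edges → s(x, z) ∉ p.edges → False := by
    intro hE1 hE2 hEp
    have hb1 : b₁ = x := by
      rw [Walk.edges] at hE1
      obtain ⟨d, hd, hde⟩ := List.mem_map.mp hE1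
      rcases dart_edge_eq_mk'_iff'.mp hde with ⟨hf, hs⟩ | ⟨hf, hs⟩
      · have := snd_dart_case hc₁ hR₁ hd hs
        rw [← this, hf]
      · exact absurd (fst_dart_case hc₁ hppath hW₁ hp hd hf hs) hEp
    have hb2 : b₂ = x := by
      rw [Walk.edges] at hE2
      obtain ⟨d, hd, hde⟩ := List.mem_map.mp hE2
      rcases dart_edge_eq_mk'_iff'.mp hde with ⟨hf, hs⟩ | ⟨hf, hs⟩
      · have := snd_dart_case hc₂ hR₂ hd hs
        rw [← this, hf]
      · exact absurd (fst_dart_case hc₂ hppath hW₂ hp hd hf hs) hEp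
    exact hbb (hb1.trans hb2.symm)
  have hkeyE : ∀ c d : V, W₁.toSubgraph.Adj c d → W₂.toSubgraph.Adj c d →
      p.toSubgraph.Adj c d := by
    intro c d had1 had2
    have he1 : s(c, d) ∈ W₁.edges := (W₁.mem_edges_toSubgraph).mp (Subgraph.mem_edgeSet.mpr had1)
    have he2 : s(c, d) ∈ W₂.edges := (W₂.mem_edges_toSubgraph).mp (Subgraph.mem_edgeSet.mpr had2)
    by_cases hpe : s(c, d) ∈ p.edges
    · exact Subgraph.mem_edgeSet.mp ((p.mem_edges_toSubgraph).mpr hpe)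
    exfalso
    have hcd : c ≠ d := (had1.adj_sub).ne
    have hcp : c ∈ p.support := hkey c (W₁.fst_mem_support_of_mem_edges he1)
      (W₂.fst_mem_support_of_mem_edges he2)
    have hdp : d ∈ p.support := hkey d (W₁.snd_mem_support_of_mem_edges he1)
      (W₂.snd_mem_support_of_mem_edges he2)
    have heq1 : s(c, d) ∈ (Walk.cons h₁ q₁ : G.Walk x z).edges := by
      rw [hW₁, Walk.edges_append] at he1
      rcases List.mem_append.mp he1 with h | h
      · exact absurd h hpe
      · exact h
    have hcq : c ∈ (Walk.cons h₁ q₁ : G.Walk x z).support :=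
      Walk.fst_mem_support_of_mem_edges _ heq1
    have hdq : d ∈ (Walk.cons h₁ q₁ : G.Walk x z).support :=
      Walk.snd_mem_support_of_mem_edges _ heq1
    have hinter : ∀ w, w ∈ p.support → w ∈ (Walk.cons h₁ q₁ : G.Walk x z).support →
        w = x ∨ w = z := by
      intro w hwp hwq
      rw [p.support_eq_cons] at hwp
      rcases List.mem_cons.mp hwp with h | h
      · exact Or.inr h
      rw [Walk.support_cons] at hwq
      rcases List.mem_cons.mp hwq with h' | h'
      · exact Or.inl h'
      · exact absurd h' (fun hh => hdisj₁ h hh)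
    rcases hinter c hcp hcq with rfl | rfl
    · rcases hinter d hdp hdq with rfl | rfl
      · exact hcd rfl
      · exact hfalse he1 he2 hpe
    · rcases hinter d hdp hdq with rfl | rfl
      · exact hfalse (Sym2.eq_swap ▸ he1) (Sym2.eq_swap ▸ he2) (Sym2.eq_swap ▸ hpe)
      · exact hcd rfl
  -- Step D : identify the intersection with the prefix
  have hle1 : p.toSubgraph ≤ W₁.toSubgraph := by
    rw [hW₁, Walk.toSubgraph_append]; exact le_sup_left
  have hle2 : p.toSubgraph ≤ W₂.toSubgraph := by
    rw [hW₂, Walk.toSubgraph_append]; exact le_sup_left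
  have heqs : W₁.toSubgraph ⊓ W₂.toSubgraph = p.toSubgraph := by
    apply le_antisymm
    · refine ⟨fun y hy => ?_, fun a b hab => ?_⟩
      · have hy1 : y ∈ W₁.support := (W₁.mem_verts_toSubgraph).mp hy.1
        have hy2 : y ∈ W₂.support := (W₂.mem_verts_toSubgraph).mp hy.2
        exact (p.mem_verts_toSubgraph).mpr (hkey y hy1 hy2)
      · exact hkeyE a b hab.1 hab.2
    · exact le_inf hle1 hle2
  exact ⟨p.length, hlm, z, x, p, hppath, rfl, heqs.symm⟩
end ApartmentAux

/-- Two apartments of a generalized `m`-gon sharing an edge are either equal or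
intersect in a path with at most `m` edges. -/
theorem apartments_sharing_edge
    (G : SimpleGraph V) (m : ℕ) (hm : 2 ≤ m) (hG : IsGenPolygon G m)
    (A₁ A₂ : G.Subgraph) (h₁ : IsApartment G m A₁) (h₂ : IsApartment G m A₂)
    (hshare : ∃ u v : V, A₁.Adj u v ∧ A₂.Adj u v) :
    A₁ = A₂ ∨ ∃ l : ℕ, l ≤ m ∧ IsPathSubgraph G l (A₁ ⊓ A₂) := by
  classical
  open ApartmentAux SimpleGraph.Walk in
  obtain ⟨u, v, hA₁uv, hA₂uv⟩ := hshare
  obtain ⟨v₁, w₁, hcyc₁, hwlen₁, rfl⟩ := h₁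
  obtain ⟨v₂, w₂, hcyc₂, hwlen₂, rfl⟩ := h₂
  have hgirth : ∀ (w : V) (c : G.Walk w w), c.IsCycle → 2 * m ≤ c.length := by
    intro w c hc
    have h1 : G.egirth ≤ (c.length : ℕ∞) := by
      unfold SimpleGraph.egirth
      exact iInf_le_of_le w (iInf_le_of_le c (iInf_le_of_le hc le_rfl))
    rw [hG.2.2.2.2] at h1
    exact_mod_cast h1
  have he₁ : s(u, v) ∈ w₁.edges :=
    (w₁.mem_edges_toSubgraph).mp (SimpleGraph.Subgraph.mem_edgeSet.mpr hA₁uv)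
  have he₂ : s(u, v) ∈ w₂.edges :=
    (w₂.mem_edges_toSubgraph).mp (SimpleGraph.Subgraph.mem_edgeSet.mpr hA₂uv)
  obtain ⟨W₁, hadj₁, T₁, hT₁, hc₁, hsub₁, hlen₁⟩ := orient w₁ hcyc₁ he₁
  obtain ⟨W₂, hadj₂, T₂, hT₂, hc₂, hsub₂, hlen₂⟩ := orient w₂ hcyc₂ he₂
  rw [hwlen₁] at hlen₁
  rw [hwlen₂] at hlen₂
  rcases exists_divergence W₁.reverse W₂.reverse
      (by rw [Walk.length_reverse, Walk.length_reverse, hlen₁, hlen₂]) with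
    heq | ⟨z', P, bb₁, bb₂, hh₁, hh₂, QQ₁, QQ₂, hbb, hrev₁, hrev₂⟩
  · left
    have hWW : W₁ = W₂ := by
      have h' := congrArg Walk.reverse heq
      rwa [Walk.reverse_reverse, Walk.reverse_reverse] at h'
    rw [← hsub₁, ← hsub₂, hWW]
  · have hsfx₁ : W₁ = (QQ₁.reverse.append (Walk.cons hh₁.symm Walk.nil)).append P.reverse := by
      have h' := congrArg Walk.reverse hrev₁
      rwa [Walk.reverse_reverse, Walk.reverse_append, Walk.reverse_cons] at h'
    have hsfx₂ : W₂ = (QQ₂.reverse.append (Walk.cons hh₂.symm Walk.nil)).append P.reverse := by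
      have h' := congrArg Walk.reverse hrev₂
      rwa [Walk.reverse_reverse, Walk.reverse_append, Walk.reverse_cons] at h'
    cases P with
    | nil =>
      rw [Walk.reverse_nil, Walk.append_nil] at hsfx₁ hsfx₂
      have hTlen : T₁.length = T₂.length := by
        rw [hT₁, Walk.length_cons] at hlen₁
        rw [hT₂, Walk.length_cons] at hlen₂
        omega
      rcases exists_divergence T₁ T₂ hTlen with
        heqT | ⟨xx, pp, aa₁, aa₂, k₁, k₂, qq₁, qq₂, haa, hd₁, hd₂⟩
      · left
        rw [← hsub₁, ← hsub₂, hT₁, hT₂, heqT]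
      · right
        have hW₁' : W₁ = (Walk.cons hadj₁ pp).append (Walk.cons k₁ qq₁) := by
          rw [hT₁, hd₁, Walk.cons_append]
        have hW₂' : W₂ = (Walk.cons hadj₁ pp).append (Walk.cons k₂ qq₂) := by
          rw [hT₂, hd₂, Walk.cons_append]
        obtain ⟨l, hl, c, c', ppw, hppw, hppl, hppsub⟩ :=
          main_config hm hgirth hc₁ hc₂ hlen₁ hlen₂ haa hW₁' hW₂'
            Walk.not_nil_cons hbb hsfx₁ hsfx₂
        exact ⟨l, hl, c, c', ppw, hppw, hppl, by rw [hppsub, ← hsub₁, ← hsub₂]⟩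
    | cons hP0 P' =>
      have hScy₁ : ((Walk.cons hP0 P').reverse.append
          (QQ₁.reverse.append (Walk.cons hh₁.symm Walk.nil))).IsCycle :=
        swap_isCycle (by rw [← hsfx₁]; exact hc₁)
      have hScy₂ : ((Walk.cons hP0 P').reverse.append
          (QQ₂.reverse.append (Walk.cons hh₂.symm Walk.nil))).IsCycle :=
        swap_isCycle (by rw [← hsfx₂]; exact hc₂)
      have hSsub₁ : ((Walk.cons hP0 P').reverse.append
          (QQ₁.reverse.append (Walk.cons hh₁.symm Walk.nil))).toSubgraph = W₁.toSubgraph := by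
        rw [Walk.toSubgraph_append, sup_comm, ← Walk.toSubgraph_append, ← hsfx₁]
      have hSsub₂ : ((Walk.cons hP0 P').reverse.append
          (QQ₂.reverse.append (Walk.cons hh₂.symm Walk.nil))).toSubgraph = W₂.toSubgraph := by
        rw [Walk.toSubgraph_append, sup_comm, ← Walk.toSubgraph_append, ← hsfx₂]
      have hSlen₁ : ((Walk.cons hP0 P').reverse.append
          (QQ₁.reverse.append (Walk.cons hh₁.symm Walk.nil))).length = 2 * m := by
        rw [Walk.length_append, Nat.add_comm, ← Walk.length_append, ← hsfx₁, hlen₁]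
      have hSlen₂ : ((Walk.cons hP0 P').reverse.append
          (QQ₂.reverse.append (Walk.cons hh₂.symm Walk.nil))).length = 2 * m := by
        rw [Walk.length_append, Nat.add_comm, ← Walk.length_append, ← hsfx₂, hlen₂]
      rcases exists_divergence
          ((Walk.cons hP0 P').reverse.append
            (QQ₁.reverse.append (Walk.cons hh₁.symm Walk.nil)))
          ((Walk.cons hP0 P').reverse.append
            (QQ₂.reverse.append (Walk.cons hh₂.symm Walk.nil)))
          (by rw [hSlen₁, hSlen₂]) with
        heqW | ⟨xx, pp, aa₁, aa₂, k₁, k₂, qq₁, qq₂, haa, hd₁, hd₂⟩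
      · left
        rw [← hsub₁, ← hsub₂, ← hSsub₁, ← hSsub₂, heqW]
      · by_cases hppnil : pp.Nil
        · exfalso
          cases hppnil
          have hSnn : ¬ (Walk.cons hP0 P').reverse.Nil := by
            rw [Walk.nil_iff_length_eq, Walk.length_reverse, Walk.length_cons]
            omega
          obtain ⟨w2, gS, S', hScons⟩ := exists_first_edge (Walk.cons hP0 P').reverse hSnn
          have hx₁ : aa₁ = w2 := by
            refine cons_second_eq (h₁ := k₁) (q₁ := qq₁) (h₂ := gS) (q₂ := S'.append
              (QQ₁.reverse.append (Walk.cons hh₁.symm Walk.nil))) ?_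
            rw [← Walk.cons_append, ← hScons, hd₁, Walk.nil_append]
          have hx₂ : aa₂ = w2 := by
            refine cons_second_eq (h₁ := k₂) (q₁ := qq₂) (h₂ := gS) (q₂ := S'.append
              (QQ₂.reverse.append (Walk.cons hh₂.symm Walk.nil))) ?_
            rw [← Walk.cons_append, ← hScons, hd₂, Walk.nil_append]
          exact haa (hx₁.trans hx₂.symm)
        · right
          have hsfx₁' : (Walk.cons hP0 P').reverse.append
              (QQ₁.reverse.append (Walk.cons hh₁.symm Walk.nil))
              = ((Walk.cons hP0 P').reverse.append QQ₁.reverse).append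
                (Walk.cons hh₁.symm Walk.nil) :=
            Walk.append_assoc _ _ _
          have hsfx₂' : (Walk.cons hP0 P').reverse.append
              (QQ₂.reverse.append (Walk.cons hh₂.symm Walk.nil))
              = ((Walk.cons hP0 P').reverse.append QQ₂.reverse).append
                (Walk.cons hh₂.symm Walk.nil) :=
            Walk.append_assoc _ _ _
          obtain ⟨l, hl, c, c', ppw, hppw, hppl, hppsub⟩ :=
            main_config hm hgirth hScy₁ hScy₂ hSlen₁ hSlen₂ haa hd₁ hd₂
              hppnil hbb hsfx₁' hsfx₂'
          exact ⟨l, hl, c, c', ppw, hppw, hppl,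
            by rw [hppsub, hSsub₁, hSsub₂, ← hsub₁, ← hsub₂]⟩
end
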